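/- arXiv:1110.5786 — 2 statements merged into one kernel-verified Lean document; each statement's English description precedes it below -/
import Mathlib

section
/- Let G ≤ Diff̂(ℂ²,0) be a subgroup and suppose there exist two commuting formal vector fields X̂₁, X̂₂ ∈ X̂(ℂ²,0) (that is, [X̂₁,X̂₂] = 0), each invariant by G, which are linearly independent over K̂₂ (writing X̂ⱼ = Aⱼ ∂/∂x + Bⱼ ∂/∂y, this means A₁B₂ − A₂B₁ ≠ 0). Then there exist two closed formal meromorphic one-forms ω̂₁, ω̂₂, linearly independent over K̂₂, each invariant by G; indeed one may take them dual to the vector fields, ω̂ᵢ(X̂ⱼ) = δᵢⱼ. -/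
noncomputable section

namespace FormalGroups

/-- Formal power series in `n` complex variables: `ℂ[[z₁,…,zₙ]]`. -/
abbrev FPS (n : ℕ) := MvPowerSeries (Fin n) ℂ

/-- Formal vector fields on `(ℂⁿ,0)`: derivations of `ℂ[[z₁,…,zₙ]]`. -/
abbrev FVF (n : ℕ) := Derivation ℂ (FPS n) (FPS n)

/-- The group of formal diffeomorphisms of `(ℂⁿ,0)`, encoded (isomorphically,
via the pullback action on power series) as the opposite of the group of
`ℂ`-algebra automorphisms of `ℂ[[z₁,…,zₙ]]`.  For `f : FDiff n`, `f.unop` is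
the pullback `h ↦ h ∘ f`; multiplication `f * g` corresponds to the
composition `f ∘ g` of formal diffeomorphisms. -/
abbrev FDiff (n : ℕ) := (FPS n ≃ₐ[ℂ] FPS n)ᵐᵒᵖ

/-- The coordinate power series `zᵢ`. -/
def Z {n : ℕ} (i : Fin n) : FPS n := MvPowerSeries.X i

/-- The `i`-th component power series `f̂ᵢ` of a formal diffeomorphism. -/
def comp {n : ℕ} (f : FDiff n) (i : Fin n) : FPS n := f.unop (Z i)

/-- Total degree of a monomial exponent. -/
def deg {n : ℕ} (d : Fin n →₀ ℕ) : ℕ := d.sum fun _ m => m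

/-- A formal vector field belongs to `X̂(ℂⁿ,0)`: its coefficients vanish at `0`. -/
def VanishesAtZero {n : ℕ} (X : FVF n) : Prop :=
  ∀ i, MvPowerSeries.constantCoeff (X (Z i)) = 0

/-- `f` is tangent to the identity: `f(z) = z + (order ≥ 2)`. -/
def TangentToId {n : ℕ} (f : FDiff n) : Prop :=
  (∀ i, MvPowerSeries.constantCoeff (comp f i) = 0) ∧
  ∀ i j, MvPowerSeries.coeff (Finsupp.single j 1) (comp f i) = if j = i then 1 else 0

/-- `f = exp (t X)`, expressed coefficientwise: `f̂ᵢ = Σ_j (tʲ/j!) X̂ʲ(zᵢ)`. -/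
def IsExpT {n : ℕ} (f : FDiff n) (t : ℂ) (X : FVF n) : Prop :=
  ∀ i d, MvPowerSeries.coeff d (comp f i) =
    ∑' j : ℕ, (t ^ j / (Nat.factorial j : ℂ)) * MvPowerSeries.coeff d ((⇑X)^[j] (Z i))

/-- `f = exp X`. -/
def IsExp {n : ℕ} (f : FDiff n) (X : FVF n) : Prop := IsExpT f 1 X

/-- The vector field `X` is invariant by the formal diffeomorphism `f`
(`f_* X = X`), i.e. `X` commutes with the pullback of `f`. -/
def InvariantBy {n : ℕ} (f : FDiff n) (X : FVF n) : Prop :=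
  ∀ h, X (f.unop h) = f.unop (X h)

/-- `f_* X = c • X`  (projective invariance, with factor `c`). -/
def ProjInvariantBy {n : ℕ} (f : FDiff n) (X : FVF n) (c : ℂ) : Prop :=
  ∀ h, X (f.unop h) = c • f.unop (X h)

/-- The two vector fields commute: `[X,Y] = 0`. -/
def CommuteVF {n : ℕ} (X Y : FVF n) : Prop := ∀ h, X (Y h) = Y (X h)

/-- All terms of the power series have degree at least `m`. -/
def OrderGE {n : ℕ} (F : FPS n) (m : ℕ) : Prop :=
  ∀ d, deg d < m → MvPowerSeries.coeff d F = 0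

/-- The vector field vanishes to order at least `m` at the origin. -/
def VFOrderGE {n : ℕ} (X : FVF n) (m : ℕ) : Prop := ∀ i, OrderGE (X (Z i)) m

/-- `f` is tangent to the identity with order (exactly) `k`:
`f(z) = z + f_{k+1}(z) + ⋯` with `f_{k+1} ≠ 0`. -/
def TangentOrder {n : ℕ} (f : FDiff n) (k : ℕ) : Prop :=
  1 ≤ k ∧
  (∀ i d, deg d ≤ k → MvPowerSeries.coeff d (comp f i) = MvPowerSeries.coeff d (Z i)) ∧
  ∃ i d, deg d = k + 1 ∧ MvPowerSeries.coeff d (comp f i) ≠ 0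

/-- A dicritic diffeomorphism of order `k`: `f(z) = z + p(z)·z + (order ≥ k+2)`,
with `p ≠ 0` homogeneous of degree `k`. -/
def IsDicriticDiffeo {n : ℕ} (f : FDiff n) (k : ℕ) : Prop :=
  1 ≤ k ∧
  (∀ i d, deg d ≤ k → MvPowerSeries.coeff d (comp f i) = MvPowerSeries.coeff d (Z i)) ∧
  ∃ p : MvPolynomial (Fin n) ℂ, p.IsHomogeneous k ∧ p ≠ 0 ∧
    ∀ i d, deg d = k + 1 →
      MvPowerSeries.coeff d (comp f i) = MvPowerSeries.coeff d ((p : FPS n) * Z i)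

/-- A dicritic vector field of index `k` (order `k+1`):
`X = p(z)·R⃗ + (order ≥ k+2)` with `p ≠ 0` homogeneous of degree `k`,
where `R⃗ = Σ zᵢ ∂/∂zᵢ` is the radial vector field. -/
def IsDicriticVF {n : ℕ} (X : FVF n) (k : ℕ) : Prop :=
  1 ≤ k ∧ VFOrderGE X (k + 1) ∧
  ∃ p : MvPolynomial (Fin n) ℂ, p.IsHomogeneous k ∧ p ≠ 0 ∧
    ∀ i d, deg d = k + 1 →
      MvPowerSeries.coeff d (X (Z i)) = MvPowerSeries.coeff d ((p : FPS n) * Z i)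

/-- A regular dicritic vector field of index `k`: dicritic, and for the
homogeneous parts `pᵢ = q i` of degree `k+2` there are indices `i₀, j₀` with
`p` and `z_{j₀} q_{i₀} − z_{i₀} q_{j₀}` coprime. -/
def IsRegDicriticVF {n : ℕ} (X : FVF n) (k : ℕ) : Prop :=
  1 ≤ k ∧ VFOrderGE X (k + 1) ∧
  ∃ (p : MvPolynomial (Fin n) ℂ) (q : Fin n → MvPolynomial (Fin n) ℂ),
    p.IsHomogeneous k ∧ p ≠ 0 ∧
    (∀ i d, deg d = k + 1 →
      MvPowerSeries.coeff d (X (Z i)) = MvPowerSeries.coeff d ((p : FPS n) * Z i)) ∧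
    (∀ i, (q i).IsHomogeneous (k + 2)) ∧
    (∀ i d, deg d = k + 2 →
      MvPowerSeries.coeff d (X (Z i)) = MvPolynomial.coeff d (q i)) ∧
    ∃ i₀ j₀ : Fin n,
      IsRelPrime p (MvPolynomial.X j₀ * q i₀ - MvPolynomial.X i₀ * q j₀)

/-- A regular dicritic diffeomorphism: its infinitesimal generator
`log f` is a regular dicritic vector field. -/
def IsRegDicriticDiffeo {n : ℕ} (f : FDiff n) (k : ℕ) : Prop :=
  ∃ X : FVF n, IsRegDicriticVF X k ∧ IsExp f X

/-- The derivative (linear part) `Df(0)` of `f` at `0`, as a matrix. -/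
def Dmat {n : ℕ} (f : FDiff n) : Matrix (Fin n) (Fin n) ℂ :=
  Matrix.of fun i j => MvPowerSeries.coeff (Finsupp.single j 1) (comp f i)

/-- `L` is the linear diffeomorphism `z ↦ M z`. -/
def IsLinearWith {n : ℕ} (L : FDiff n) (M : Matrix (Fin n) (Fin n) ℂ) : Prop :=
  ∀ i, comp L i = ∑ j, M i j • Z j

/-- Formal partial derivative `∂/∂zᵢ` on `ℂ[[z₁,…,zₙ]]`. -/
def pd {n : ℕ} (i : Fin n) (F : FPS n) : FPS n :=
  fun d => ((d i : ℂ) + 1) * MvPowerSeries.coeff (d + Finsupp.single i 1) F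

/-- A formal meromorphic one-form `Σⱼ (Aⱼ/C) dzⱼ`, presented with a common
denominator `C ≠ 0` (its coefficients are elements `Aⱼ/C` of the fraction
field `K̂ₙ` of `ℂ[[z₁,…,zₙ]]`). -/
structure MeroForm (n : ℕ) where
  A : Fin n → FPS n
  C : FPS n
  hC : C ≠ 0

/-- The one-form is closed (`dω = 0`), with denominators cleared. -/
def FormClosed {n : ℕ} (ω : MeroForm n) : Prop :=
  ∀ i j, pd i (ω.A j) * ω.C - ω.A j * pd i ω.C = pd j (ω.A i) * ω.C - ω.A i * pd j ω.C

/-- `g*ω = ω` (invariance of the one-form under pullback), denominators cleared. -/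
def FormInvariantBy {n : ℕ} (g : FDiff n) (ω : MeroForm n) : Prop :=
  ∀ j, (∑ i, g.unop (ω.A i) * pd j (comp g i)) * ω.C = ω.A j * g.unop ω.C

/-- `g*ω = a ω₁ + b ω₂`, denominators cleared. -/
def FormPullbackComb {n : ℕ} (g : FDiff n) (ω ω₁ ω₂ : MeroForm n) (a b : ℂ) : Prop :=
  ∀ j, (∑ i, g.unop (ω.A i) * pd j (comp g i)) * (ω₁.C * ω₂.C)
    = (a • (ω₁.A j * ω₂.C) + b • (ω₂.A j * ω₁.C)) * g.unop ω.C

/-- `ω₁, ω₂` are `ℂ`-linearly independent as meromorphic one-forms. -/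
def FormsIndepC {n : ℕ} (ω₁ ω₂ : MeroForm n) : Prop :=
  ∀ a b : ℂ, (∀ j, a • (ω₁.A j * ω₂.C) + b • (ω₂.A j * ω₁.C) = 0) → a = 0 ∧ b = 0

/-- A formal curve: a nonzero non-invertible formal series. -/
def IsFormalCurve (φ : FPS 2) : Prop :=
  φ ≠ 0 ∧ MvPowerSeries.constantCoeff φ = 0

/-- The formal curve `φ` is invariant by `f`: `φ ∘ f = u·φ` for a unit `u`. -/
def CurveInvariantBy (f : FDiff 2) (φ : FPS 2) : Prop :=
  ∃ u : FPS 2, IsUnit u ∧ f.unop φ = u * φ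

/-- Linear coefficient of `φ` in the variable `zᵢ` (the differential `Dφ(0)`). -/
def lc (i : Fin 2) (φ : FPS 2) : ℂ := MvPowerSeries.coeff (Finsupp.single i 1) φ

/-- The formal curves `φ, ψ` are transverse: each tangent space (kernel of the
differential at `0`) is one-dimensional and together they span `ℂ²`;
equivalently the two differentials at `0` are linearly independent. -/
def Transverse (φ ψ : FPS 2) : Prop :=
  lc 0 φ * lc 1 ψ - lc 1 φ * lc 0 ψ ≠ 0

/-- The formal power series is convergent (defines a germ of holomorphic
function): its coefficients grow at most geometrically. -/
def IsConvergent {n : ℕ} (F : FPS n) : Prop :=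
  ∃ M A : ℝ, ∀ d, ‖MvPowerSeries.coeff d F‖ ≤ M * A ^ deg d

/-- `g* X = (p/q)·X`, denominators cleared: the pullback `g* X = (g⁻¹)_* X`
of the vector field `X` equals the rational multiple `(p/q) X`. -/
def PullbackEqRat {n : ℕ} (g : FDiff n) (X : FVF n) (p q : FPS n) : Prop :=
  ∀ h, q * g.unop (X (g.unop.symm h)) = p * X h

/-- `g* X = s X₁ + t X₂` (pullback of `X` is a constant combination). -/
def PullbackEqComb {n : ℕ} (g : FDiff n) (X X₁ X₂ : FVF n) (s t : ℂ) : Prop :=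
  ∀ h, g.unop (X (g.unop.symm h)) = s • X₁ h + t • X₂ h

end FormalGroups

namespace FormalGroups
open MvPowerSeries

section Aux

variable {n : ℕ}

lemma coeff_pd (i : Fin n) (F : FPS n) (d : Fin n →₀ ℕ) :
    coeff d (pd i F) = ((d i : ℂ) + 1) * coeff (d + Finsupp.single i 1) F := rfl

lemma pd_add (i : Fin n) (F G : FPS n) : pd i (F + G) = pd i F + pd i G := by
  ext d
  simp only [coeff_pd, map_add, mul_add]

lemma pd_sub (i : Fin n) (F G : FPS n) : pd i (F - G) = pd i F - pd i G := by
  ext d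
  simp only [coeff_pd, map_sub, mul_sub]

lemma pd_neg (i : Fin n) (F : FPS n) : pd i (-F) = -pd i F := by
  ext d
  simp only [coeff_pd, map_neg, mul_neg]

lemma deg_add (a b : Fin n →₀ ℕ) : deg (a + b) = deg a + deg b := by
  unfold deg
  exact Finsupp.sum_add_index' (fun _ => rfl) (fun _ _ _ => rfl)

lemma apply_le_deg (d : Fin n →₀ ℕ) (i : Fin n) : d i ≤ deg d := by
  by_cases h : d i = 0
  · simp [h]
  · unfold deg
    rw [Finsupp.sum]
    exact Finset.single_le_sum (f := fun j => d j) (fun _ _ => Nat.zero_le _)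
      (Finsupp.mem_support_iff.mpr h)

lemma ordGE_mono {F : FPS n} {M M' : ℕ} (h : M ≤ M') (hF : OrderGE F M') : OrderGE F M :=
  fun d hd => hF d (lt_of_lt_of_le hd h)

lemma ordGE_add {F G : FPS n} {M : ℕ} (hF : OrderGE F M) (hG : OrderGE G M) :
    OrderGE (F + G) M := fun d hd => by
  rw [map_add, hF d hd, hG d hd, add_zero]

lemma ordGE_mul {F G : FPS n} {M K : ℕ} (hF : OrderGE F M) (hG : OrderGE G K) :
    OrderGE (F * G) (M + K) := by
  intro d hd
  rw [coeff_mul]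
  apply Finset.sum_eq_zero
  intro p hp
  rw [Finset.HasAntidiagonal.mem_antidiagonal] at hp
  have hdeg : deg p.1 + deg p.2 = deg d := by rw [← deg_add, hp]
  rcases lt_or_ge (deg p.1) M with h | h
  · rw [hF _ h, zero_mul]
  · have : deg p.2 < K := by omega
    rw [hG _ this, mul_zero]

lemma ordGE_mul_left {F G : FPS n} {K : ℕ} (hG : OrderGE G K) : OrderGE (F * G) K := by
  have := ordGE_mul (F := F) (M := 0) (fun d hd => absurd hd (by omega)) hG
  simpa using this

lemma ordGE_mul_right {F G : FPS n} {M : ℕ} (hF : OrderGE F M) : OrderGE (F * G) M := by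
  have := ordGE_mul (K := 0) hF (G := G) (fun d hd => absurd hd (by omega))
  simpa using this

lemma ordGE_X (i : Fin n) : OrderGE (MvPowerSeries.X i : FPS n) 1 := by
  intro d hd
  rw [MvPowerSeries.coeff_X]
  split_ifs with h
  · subst h
    unfold deg at hd
    simp [Finsupp.sum_single_index] at hd
  · rfl

lemma pd_ordGE {F : FPS n} {N : ℕ} (i : Fin n) (hF : OrderGE F (N + 1)) :
    OrderGE (pd i F) N := by
  intro d hd
  show ((d i : ℂ) + 1) * coeff (d + Finsupp.single i 1) F = 0
  rw [hF, mul_zero]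
  rw [deg_add]
  have : deg (Finsupp.single i 1) = 1 := by unfold deg; simp
  omega

lemma pd_coe (i : Fin n) (P : MvPolynomial (Fin n) ℂ) :
    pd i (P : FPS n) = ((MvPolynomial.pderiv i P : MvPolynomial (Fin n) ℂ) : FPS n) := by
  induction P using MvPolynomial.induction_on' with
  | add p q hp hq =>
    rw [MvPolynomial.coe_add, pd_add, hp, hq, map_add, MvPolynomial.coe_add]
  | monomial e c =>
    ext d
    rw [coeff_pd, MvPolynomial.pderiv_monomial, MvPolynomial.coe_monomial,
      MvPolynomial.coe_monomial, coeff_monomial, coeff_monomial]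
    by_cases h : d + Finsupp.single i 1 = e
    · have hd : d = e - Finsupp.single i 1 := by
        rw [← h]; ext j; simp [Finsupp.single_apply]
      have hei : (e i : ℂ) = (d i : ℂ) + 1 := by
        rw [← h]; push_cast; simp
      rw [if_pos h, if_pos hd, hei]
      ring
    · rw [if_neg h, mul_zero]
      by_cases hd : d = e - Finsupp.single i 1
      · rw [if_pos hd]
        by_cases hei : e i = 0
        · simp [hei]
        · exfalso
          apply h
          rw [hd]
          ext j
          rcases eq_or_ne j i with rfl | hj
          · simp; omega
          · simp [Finsupp.single_apply, hj.symm, Ne.symm hj]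
      · rw [if_neg hd]

/-- truncation bound -/
def bnd (N : ℕ) : Fin 2 →₀ ℕ := Finsupp.equivFunOnFinite.symm (fun _ => N)

lemma ordGE_sub_trunc (F : FPS 2) (N : ℕ) :
    OrderGE (F - ((trunc ℂ (bnd N) F : MvPolynomial (Fin 2) ℂ) : FPS 2)) N := by
  intro d hd
  rw [map_sub, MvPolynomial.coeff_coe, coeff_trunc]
  have hbnd : ∀ j, bnd N j = N := fun j => rfl
  have hlt : d < bnd N := by
    rw [lt_iff_le_and_ne]
    constructor
    · intro j
      have := apply_le_deg d j
      rw [hbnd]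
      omega
    · intro heq
      have h0 : d 0 = N := by rw [heq]; exact hbnd 0
      have := apply_le_deg d 0
      omega
  rw [if_pos hlt, sub_self]

lemma coeff_eq_of_ordGE {F G : FPS 2} {d : Fin 2 →₀ ℕ}
    (h : OrderGE (F - G) (deg d + 1)) : coeff d F = coeff d G := by
  have := h d (by omega)
  rw [map_sub, sub_eq_zero] at this
  exact this

lemma pd_mul (i : Fin 2) (F G : FPS 2) : pd i (F * G) = pd i F * G + F * pd i G := by
  ext d
  set N := deg d + 2 with hN
  set TF : MvPolynomial (Fin 2) ℂ := trunc ℂ (bnd N) F with hTF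
  set TG : MvPolynomial (Fin 2) ℂ := trunc ℂ (bnd N) G with hTG
  have hRF : OrderGE (F - (TF : FPS 2)) N := ordGE_sub_trunc F N
  have hRG : OrderGE (G - (TG : FPS 2)) N := ordGE_sub_trunc G N
  have e1 : coeff d (pd i (F * G)) = coeff d (pd i ((TF : FPS 2) * (TG : FPS 2))) := by
    apply coeff_eq_of_ordGE
    rw [← pd_sub]
    apply pd_ordGE
    apply ordGE_mono (show deg d + 1 + 1 ≤ N by omega)
    have : F * G - (TF : FPS 2) * (TG : FPS 2)
        = (F - (TF : FPS 2)) * G + (TF : FPS 2) * (G - (TG : FPS 2)) := by ring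
    rw [this]
    exact ordGE_add (ordGE_mul_right hRF) (ordGE_mul_left hRG)
  have e2 : coeff d (pd i F * G + F * pd i G)
      = coeff d (pd i (TF : FPS 2) * (TG : FPS 2) + (TF : FPS 2) * pd i (TG : FPS 2)) := by
    apply coeff_eq_of_ordGE
    have : pd i F * G + F * pd i G
        - (pd i (TF : FPS 2) * (TG : FPS 2) + (TF : FPS 2) * pd i (TG : FPS 2))
        = pd i F * (G - (TG : FPS 2)) + (pd i F - pd i (TF : FPS 2)) * (TG : FPS 2)
          + ((F - (TF : FPS 2)) * pd i G + (TF : FPS 2) * (pd i G - pd i (TG : FPS 2))) := by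
      ring
    rw [this]
    apply ordGE_add
    · apply ordGE_add
      · exact ordGE_mul_left (ordGE_mono (by omega) hRG)
      · rw [← pd_sub]
        exact ordGE_mul_right (pd_ordGE i (ordGE_mono (by omega) hRF))
    · apply ordGE_add
      · exact ordGE_mul_right (ordGE_mono (by omega) hRF)
      · rw [← pd_sub]
        exact ordGE_mul_left (pd_ordGE i (ordGE_mono (by omega) hRG))
  rw [e1, e2, ← MvPolynomial.coe_mul, pd_coe, pd_coe, pd_coe, MvPolynomial.pderiv_mul,
    MvPolynomial.coe_add, MvPolynomial.coe_mul, MvPolynomial.coe_mul]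

lemma exists_decomp {R : FPS 2} {N : ℕ} (h : OrderGE R (N + 1)) :
    ∃ G H : FPS 2, OrderGE G N ∧ OrderGE H N ∧ R = Z 0 * G + Z 1 * H := by
  classical
  refine ⟨fun e => coeff (e + Finsupp.single 0 1) R,
    fun e => if e 0 = 0 then coeff (e + Finsupp.single 1 1) R else 0, ?_, ?_, ?_⟩
  · intro d hd
    apply h
    rw [deg_add]
    have : deg (Finsupp.single (0 : Fin 2) 1) = 1 := by unfold deg; simp
    omega
  · intro d hd
    show (if d 0 = 0 then coeff (d + Finsupp.single 1 1) R else 0) = 0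
    split_ifs with h0
    · apply h
      rw [deg_add]
      have : deg (Finsupp.single (1 : Fin 2) 1) = 1 := by unfold deg; simp
      omega
    · rfl
  · ext d
    rw [map_add]
    show coeff d R = coeff d (Z 0 * _) + coeff d (Z 1 * _)
    rw [show (Z 0 : FPS 2) = MvPowerSeries.X 0 from rfl, show (Z 1 : FPS 2) = MvPowerSeries.X 1 from rfl]
    rw [mul_comm (MvPowerSeries.X 0 : FPS 2) (fun e => coeff (e + Finsupp.single 0 1) R),
      mul_comm (MvPowerSeries.X 1 : FPS 2) (fun e => if e 0 = 0 then coeff (e + Finsupp.single 1 1) R else 0)]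
    rw [X_def, X_def, coeff_mul_monomial (φ := (fun e => coeff (e + Finsupp.single 0 1) R : FPS 2)),
      coeff_mul_monomial (φ := (fun e => if e 0 = 0 then coeff (e + Finsupp.single 1 1) R else 0 : FPS 2))]
    simp only [mul_one]
    by_cases h0 : Finsupp.single (0 : Fin 2) 1 ≤ d
    · rw [if_pos h0]
      have hd0 : 1 ≤ d 0 := (Finsupp.single_le_iff).mp h0
      have key : (MvPowerSeries.coeff (d - Finsupp.single 0 1))
          (fun e => (MvPowerSeries.coeff (e + Finsupp.single 0 1)) R)
          = coeff (d - Finsupp.single 0 1 + Finsupp.single 0 1) R := rfl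
      rw [key, tsub_add_cancel_of_le h0]
      have h2 : (if Finsupp.single (1 : Fin 2) 1 ≤ d then
          ((MvPowerSeries.coeff (d - Finsupp.single (1 : Fin 2) 1)) fun e =>
            if e 0 = 0 then (MvPowerSeries.coeff (e + Finsupp.single 1 1)) R else 0)
          else 0) = 0 := by
        split_ifs with h1
        · have he : (d - Finsupp.single (1 : Fin 2) 1 : Fin 2 →₀ ℕ) 0 = d 0 := by rw [Finsupp.tsub_apply]; simp
          have key2 : ((MvPowerSeries.coeff (d - Finsupp.single (1 : Fin 2) 1)) fun e =>
              if e 0 = 0 then (MvPowerSeries.coeff (e + Finsupp.single 1 1)) R else 0)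
              = if (d - Finsupp.single (1 : Fin 2) 1 : Fin 2 →₀ ℕ) 0 = 0 then
                (MvPowerSeries.coeff ((d - Finsupp.single (1 : Fin 2) 1) + Finsupp.single 1 1)) R
              else 0 := rfl
          rw [key2, if_neg (by omega)]
        · rfl
      rw [h2, add_zero]
    · rw [if_neg h0, zero_add]
      have hd0 : d 0 = 0 := by
        have := Finsupp.single_le_iff.not.mp h0
        omega
      by_cases h1 : Finsupp.single (1 : Fin 2) 1 ≤ d
      · rw [if_pos h1]
        have he : (d - Finsupp.single (1 : Fin 2) 1 : Fin 2 →₀ ℕ) 0 = d 0 := by rw [Finsupp.tsub_apply]; simp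
        have key2 : ((MvPowerSeries.coeff (d - Finsupp.single (1 : Fin 2) 1)) fun e =>
            if e 0 = 0 then (MvPowerSeries.coeff (e + Finsupp.single 1 1)) R else 0)
            = if (d - Finsupp.single (1 : Fin 2) 1 : Fin 2 →₀ ℕ) 0 = 0 then
              (MvPowerSeries.coeff ((d - Finsupp.single (1 : Fin 2) 1) + Finsupp.single 1 1)) R
            else 0 := rfl
        rw [key2, if_pos (by omega), tsub_add_cancel_of_le h1]
      · rw [if_neg h1]
        have hd1 : d 1 = 0 := by
          have := Finsupp.single_le_iff.not.mp h1
          omega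
        have hd : d = 0 := by
          ext j
          fin_cases j
          · exact hd0
          · exact hd1
        rw [hd]
        exact h 0 (by unfold deg; simp)

lemma deriv_ordGE (D : FVF 2) : ∀ (N : ℕ) (R : FPS 2), OrderGE R N → OrderGE (D R) (N - 1) := by
  intro N
  induction N with
  | zero => intro R _ d hd; omega
  | succ N ih =>
    intro R hR
    rcases N with _ | M
    · intro d hd; omega
    · -- N+1 = M+2 ; want OrderGE (D R) (M+1)
      obtain ⟨G, H, hG, hH, rfl⟩ := exists_decomp hR
      have hDG := ih G hG
      have hDH := ih H hH
      rw [map_add, Derivation.leibniz, Derivation.leibniz]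
      simp only [smul_eq_mul]
      have hZ0 : OrderGE (Z 0 : FPS 2) 1 := ordGE_X 0
      have hZ1 : OrderGE (Z 1 : FPS 2) 1 := ordGE_X 1
      apply ordGE_add <;> apply ordGE_add
      · exact ordGE_mono (by omega) (ordGE_mul hZ0 hDG)
      · exact ordGE_mono (by omega) (ordGE_mul_right hG)
      · exact ordGE_mono (by omega) (ordGE_mul hZ1 hDH)
      · exact ordGE_mono (by omega) (ordGE_mul_right hH)

lemma deriv_coe_poly (D : FVF 2) (P : MvPolynomial (Fin 2) ℂ) :
    D (P : FPS 2) = D (Z 0) * ((MvPolynomial.pderiv 0 P : MvPolynomial (Fin 2) ℂ) : FPS 2)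
      + D (Z 1) * ((MvPolynomial.pderiv 1 P : MvPolynomial (Fin 2) ℂ) : FPS 2) := by
  induction P using MvPolynomial.induction_on with
  | C a =>
    have : ((MvPolynomial.C a : MvPolynomial (Fin 2) ℂ) : FPS 2) = algebraMap ℂ (FPS 2) a := by
      rw [MvPolynomial.coe_C, c_eq_algebraMap]
    rw [this]
    simp
  | add p q hp hq =>
    rw [MvPolynomial.coe_add, map_add, hp, hq, map_add, map_add,
      MvPolynomial.coe_add, MvPolynomial.coe_add]
    ring
  | mul_X p i hp =>
    rw [MvPolynomial.coe_mul, Derivation.leibniz, MvPolynomial.coe_X]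
    simp only [smul_eq_mul]
    have hpd : ∀ j : Fin 2, MvPolynomial.pderiv j (p * MvPolynomial.X i)
        = MvPolynomial.pderiv j p * MvPolynomial.X i
          + p * MvPolynomial.pderiv j (MvPolynomial.X i) := by
      intro j
      rw [MvPolynomial.pderiv_mul]
    rw [hpd 0, hpd 1]
    have hXZ : ∀ j : Fin 2, (MvPowerSeries.X j : FPS 2) = Z j := fun _ => rfl
    have hi : i = 0 ∨ i = 1 := by
      fin_cases i
      · exact Or.inl rfl
      · exact Or.inr rfl
    rcases hi with rfl | rfl
    · rw [MvPolynomial.pderiv_X_self,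
        MvPolynomial.pderiv_X_of_ne (show (0 : Fin 2) ≠ 1 by decide)]
      simp only [MvPolynomial.coe_add, MvPolynomial.coe_mul, MvPolynomial.coe_X,
        MvPolynomial.coe_one, MvPolynomial.coe_zero, mul_one, mul_zero, add_zero, hXZ]
      rw [hp]
      ring
    · rw [MvPolynomial.pderiv_X_self,
        MvPolynomial.pderiv_X_of_ne (show (1 : Fin 2) ≠ 0 by decide)]
      simp only [MvPolynomial.coe_add, MvPolynomial.coe_mul, MvPolynomial.coe_X,
        MvPolynomial.coe_one, MvPolynomial.coe_zero, mul_one, mul_zero, add_zero, hXZ]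
      rw [hp]
      ring

lemma deriv_eq_pd (D : FVF 2) (F : FPS 2) :
    D F = D (Z 0) * pd 0 F + D (Z 1) * pd 1 F := by
  ext d
  set N := deg d + 2 with hN
  set T : MvPolynomial (Fin 2) ℂ := trunc ℂ (bnd N) F with hT
  have hR : OrderGE (F - (T : FPS 2)) N := ordGE_sub_trunc F N
  have e1 : coeff d (D F) = coeff d (D (T : FPS 2)) := by
    apply coeff_eq_of_ordGE
    rw [← map_sub]
    have := deriv_ordGE D N _ hR
    exact ordGE_mono (by omega) this
  have e2 : coeff d (D (Z 0) * pd 0 F + D (Z 1) * pd 1 F)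
      = coeff d (D (Z 0) * pd 0 (T : FPS 2) + D (Z 1) * pd 1 (T : FPS 2)) := by
    apply coeff_eq_of_ordGE
    have heq : D (Z 0) * pd 0 F + D (Z 1) * pd 1 F
        - (D (Z 0) * pd 0 (T : FPS 2) + D (Z 1) * pd 1 (T : FPS 2))
        = D (Z 0) * (pd 0 F - pd 0 (T : FPS 2)) + D (Z 1) * (pd 1 F - pd 1 (T : FPS 2)) := by
      ring
    rw [heq]
    apply ordGE_add <;>
    · apply ordGE_mul_left
      rw [← pd_sub]
      exact pd_ordGE _ (ordGE_mono (by omega) hR)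
  rw [e1, e2, deriv_coe_poly, pd_coe, pd_coe]

lemma closed_of (w : MeroForm 2)
    (hkey : pd 0 (w.A 1) * w.C - w.A 1 * pd 0 w.C = pd 1 (w.A 0) * w.C - w.A 0 * pd 1 w.C) :
    FormClosed w := by
  intro i j
  have hi : i = 0 ∨ i = 1 := by
    fin_cases i
    · exact Or.inl rfl
    · exact Or.inr rfl
  have hj : j = 0 ∨ j = 1 := by
    fin_cases j
    · exact Or.inl rfl
    · exact Or.inr rfl
  rcases hi with rfl | rfl <;> rcases hj with rfl | rfl
  · rfl
  · exact hkey
  · exact hkey.symm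
  · rfl


end Aux
/-- a subgroup of `Diff̂(ℂ²,0)` preserving two commuting formal
vector fields, linearly independent over `K̂₂`, preserves two closed formal
meromorphic one-forms, linearly independent over `K̂₂`; one may take them dual
to the vector fields: `ωᵢ(X̂ⱼ) = δᵢⱼ`. -/
theorem invariant_closed_one_forms_of_invariant_vector_fields
    (G : Subgroup (FDiff 2)) (X : Fin 2 → FVF 2)
    (h0 : ∀ j, VanishesAtZero (X j))
    (hcomm : CommuteVF (X 0) (X 1))
    (hinv : ∀ g ∈ G, ∀ j, InvariantBy g (X j))
    (hindep : (X 0) (Z 0) * (X 1) (Z 1) - (X 1) (Z 0) * (X 0) (Z 1) ≠ 0) :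
    ∃ ω : Fin 2 → MeroForm 2,
      (∀ i, FormClosed (ω i)) ∧
      (∀ g ∈ G, ∀ i, FormInvariantBy g (ω i)) ∧
      ((ω 0).A 0 * (ω 1).A 1 - (ω 0).A 1 * (ω 1).A 0 ≠ 0) ∧
      (∀ i j, (∑ l, (ω i).A l * (X j) (Z l)) = (if i = j then 1 else 0) * (ω i).C) := by
  classical
  have hΔne : ((X 0) (Z 0) * (X 1) (Z 1) - (X 1) (Z 0) * (X 0) (Z 1) : FPS 2) ≠ 0 := hindep
  set w0 : MeroForm 2 := ⟨![(X 1) (Z 1), -(X 1) (Z 0)], (X 0) (Z 0) * (X 1) (Z 1) - (X 1) (Z 0) * (X 0) (Z 1), hΔne⟩ with hw0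
  set w1 : MeroForm 2 := ⟨![-(X 0) (Z 1), (X 0) (Z 0)], (X 0) (Z 0) * (X 1) (Z 1) - (X 1) (Z 0) * (X 0) (Z 1), hΔne⟩ with hw1
  have hA00 : w0.A 0 = (X 1) (Z 1) := rfl
  have hA01 : w0.A 1 = -(X 1) (Z 0) := rfl
  have hA10 : w1.A 0 = -(X 0) (Z 1) := rfl
  have hA11 : w1.A 1 = (X 0) (Z 0) := rfl
  have hC0 : w0.C = (X 0) (Z 0) * (X 1) (Z 1) - (X 1) (Z 0) * (X 0) (Z 1) := rfl
  have hC1 : w1.C = (X 0) (Z 0) * (X 1) (Z 1) - (X 1) (Z 0) * (X 0) (Z 1) := rfl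
  have hcm0 : (X 0) (Z 0) * pd 0 ((X 1) (Z 0)) + (X 0) (Z 1) * pd 1 ((X 1) (Z 0))
      = (X 1) (Z 0) * pd 0 ((X 0) (Z 0)) + (X 1) (Z 1) * pd 1 ((X 0) (Z 0)) := by
    have h := hcomm (Z 0)
    rw [deriv_eq_pd (X 0) ((X 1) (Z 0)), deriv_eq_pd (X 1) ((X 0) (Z 0))] at h
    exact h
  have hcm1 : (X 0) (Z 0) * pd 0 ((X 1) (Z 1)) + (X 0) (Z 1) * pd 1 ((X 1) (Z 1))
      = (X 1) (Z 0) * pd 0 ((X 0) (Z 1)) + (X 1) (Z 1) * pd 1 ((X 0) (Z 1)) := by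
    have h := hcomm (Z 1)
    rw [deriv_eq_pd (X 0) ((X 1) (Z 1)), deriv_eq_pd (X 1) ((X 0) (Z 1))] at h
    exact h
  have hpdΔ : ∀ i : Fin 2, pd i ((X 0) (Z 0) * (X 1) (Z 1) - (X 1) (Z 0) * (X 0) (Z 1))
      = pd i ((X 0) (Z 0)) * (X 1) (Z 1) + (X 0) (Z 0) * pd i ((X 1) (Z 1))
        - (pd i ((X 1) (Z 0)) * (X 0) (Z 1) + (X 1) (Z 0) * pd i ((X 0) (Z 1))) := by
    intro i
    rw [pd_sub, pd_mul, pd_mul]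
  refine ⟨![w0, w1], ?_, ?_, ?_, ?_⟩
  · -- closedness
    intro i
    have hi : i = 0 ∨ i = 1 := by
      fin_cases i
      · exact Or.inl rfl
      · exact Or.inr rfl
    rcases hi with rfl | rfl
    · show FormClosed w0
      apply closed_of
      rw [hA00, hA01, hC0, pd_neg, hpdΔ 0, hpdΔ 1]
      linear_combination (-((X 1) (Z 1))) * hcm0 + (X 1) (Z 0) * hcm1
    · show FormClosed w1
      apply closed_of
      rw [hA10, hA11, hC1, pd_neg, hpdΔ 0, hpdΔ 1]
      linear_combination (X 0) (Z 1) * hcm0 - (X 0) (Z 0) * hcm1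
  · -- invariance
    intro g hg i
    have R : ∀ k m : Fin 2, (X k) (Z 0) * pd 0 (comp g m) + (X k) (Z 1) * pd 1 (comp g m)
        = g.unop ((X k) (Z m)) := by
      intro k m
      rw [← deriv_eq_pd (X k) (comp g m)]
      exact hinv g hg k (Z m)
    have hi : i = 0 ∨ i = 1 := by
      fin_cases i
      · exact Or.inl rfl
      · exact Or.inr rfl
    rcases hi with rfl | rfl
    · show FormInvariantBy g w0
      intro j
      rw [Fin.sum_univ_two, hA00, hA01, hC0, map_neg, map_sub, map_mul, map_mul,
        ← R 0 0, ← R 0 1, ← R 1 0, ← R 1 1]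
      have hj : j = 0 ∨ j = 1 := by
        fin_cases j
        · exact Or.inl rfl
        · exact Or.inr rfl
      rcases hj with rfl | rfl
      · rw [hA00]
        ring
      · rw [hA01]
        ring
    · show FormInvariantBy g w1
      intro j
      rw [Fin.sum_univ_two, hA10, hA11, hC1, map_neg, map_sub, map_mul, map_mul,
        ← R 0 0, ← R 0 1, ← R 1 0, ← R 1 1]
      have hj : j = 0 ∨ j = 1 := by
        fin_cases j
        · exact Or.inl rfl
        · exact Or.inr rfl
      rcases hj with rfl | rfl
      · rw [hA10]
        ring
      · rw [hA11]
        ring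
  · -- independence
    show w0.A 0 * w1.A 1 - w0.A 1 * w1.A 0 ≠ 0
    rw [hA00, hA01, hA10, hA11]
    intro h
    apply hΔne
    linear_combination h
  · -- duality
    intro i j
    have hi : i = 0 ∨ i = 1 := by
      fin_cases i
      · exact Or.inl rfl
      · exact Or.inr rfl
    have hj : j = 0 ∨ j = 1 := by
      fin_cases j
      · exact Or.inl rfl
      · exact Or.inr rfl
    rcases hi with rfl | rfl <;> rcases hj with rfl | rfl
    · show ∑ l, w0.A l * (X 0) (Z l) = (if (0 : Fin 2) = 0 then 1 else 0) * w0.C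
      rw [Fin.sum_univ_two, hA00, hA01, hC0, if_pos rfl]
      ring
    · show ∑ l, w0.A l * (X 1) (Z l) = (if (0 : Fin 2) = 1 then 1 else 0) * w0.C
      rw [Fin.sum_univ_two, hA00, hA01, hC0, if_neg (by decide)]
      ring
    · show ∑ l, w1.A l * (X 0) (Z l) = (if (1 : Fin 2) = 0 then 1 else 0) * w1.C
      rw [Fin.sum_univ_two, hA10, hA11, hC1, if_neg (by decide)]
      ring
    · show ∑ l, w1.A l * (X 1) (Z l) = (if (1 : Fin 2) = 1 then 1 else 0) * w1.C
      rw [Fin.sum_univ_two, hA10, hA11, hC1, if_pos rfl]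
      ring

end FormalGroups
end
end

section
/- Let X̂ ∈ X̂_k(ℂⁿ,0), k ≥ 1, be a formal vector field vanishing to order ≥ 2 at the origin, and let f̂ ∈ Diff̂(ℂⁿ,0). If f̂ commutes with the time-one map exp(X̂), then f̂ commutes with exp(tX̂) for every t ∈ ℂ. -/
noncomputable section

namespace FormalGroups
open MvPowerSeries

section Aux
variable {n : ℕ}

lemma deg_eq_sum (d : Fin n →₀ ℕ) : deg d = ∑ i, d i := by
  rw [deg, Finsupp.sum_fintype]; intro; rfl

lemma deg_mono {a b : Fin n →₀ ℕ} (h : a ≤ b) : deg a ≤ deg b := by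
  simp only [deg_eq_sum]
  exact Finset.sum_le_sum fun i _ => h i

lemma deg_eq_zero {d : Fin n →₀ ℕ} (h : deg d = 0) : d = 0 := by
  rw [deg_eq_sum] at h
  ext i
  exact Finset.sum_eq_zero_iff.mp h i (Finset.mem_univ i)

lemma deg_sub_add {e d : Fin n →₀ ℕ} (h : e ≤ d) : deg (d - e) + deg e = deg d := by
  rw [← deg_add, tsub_add_cancel_of_le h]

lemma orderGE_of_le {F : FPS n} {a b : ℕ} (hab : a ≤ b) (h : OrderGE F b) : OrderGE F a :=
  fun d hd => h d (lt_of_lt_of_le hd hab)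

lemma orderGE_add {F G : FPS n} {m : ℕ} (hF : OrderGE F m) (hG : OrderGE G m) :
    OrderGE (F + G) m := by
  intro d hd; rw [map_add, hF d hd, hG d hd, add_zero]

lemma orderGE_neg {F : FPS n} {m : ℕ} (hF : OrderGE F m) : OrderGE (-F) m := by
  intro d hd; rw [map_neg, hF d hd, neg_zero]

lemma orderGE_sub {F G : FPS n} {m : ℕ} (hF : OrderGE F m) (hG : OrderGE G m) :
    OrderGE (F - G) m := by
  intro d hd; rw [map_sub, hF d hd, hG d hd, sub_zero]

lemma orderGE_smul {F : FPS n} {m : ℕ} (c : ℂ) (hF : OrderGE F m) : OrderGE (c • F) m := by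
  intro d hd; rw [map_smul, hF d hd, smul_zero]

lemma orderGE_sum {α : Type*} {s : Finset α} {G : α → FPS n} {m : ℕ}
    (h : ∀ a ∈ s, OrderGE (G a) m) : OrderGE (∑ a ∈ s, G a) m := by
  intro d hd
  rw [map_sum]
  exact Finset.sum_eq_zero fun a ha => h a ha d hd

lemma orderGE_mul {F G : FPS n} {a b : ℕ} (hF : OrderGE F a) (hG : OrderGE G b) :
    OrderGE (F * G) (a + b) := by
  intro d hd
  rw [coeff_mul]
  apply Finset.sum_eq_zero
  rintro ⟨p, q⟩ hpq
  rw [Finset.HasAntidiagonal.mem_antidiagonal] at hpq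
  have hdeg : deg p + deg q = deg d := by rw [← deg_add, hpq]
  rcases lt_or_ge (deg p) a with h1 | h1
  · rw [hF p h1, zero_mul]
  · have : deg q < b := by omega
    rw [hG q this, mul_zero]

lemma orderGE_mul_left {F G : FPS n} {b : ℕ} (hG : OrderGE G b) : OrderGE (F * G) b := by
  have := orderGE_mul (F := F) (a := 0) (fun d hd => absurd hd (Nat.not_lt_zero _)) hG
  simpa using this

lemma orderGE_mul_right {F G : FPS n} {a : ℕ} (hF : OrderGE F a) : OrderGE (F * G) a := by
  have := orderGE_mul (G := G) (b := 0) hF (fun d hd => absurd hd (Nat.not_lt_zero _))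
  simpa using this

lemma orderGE_X (i : Fin n) : OrderGE (Z i) 1 := by
  intro d hd
  have hd0 : d = 0 := deg_eq_zero (Nat.lt_one_iff.mp hd)
  rw [Z, coeff_X, if_neg]
  rintro rfl
  have := congrArg (fun f : Fin n →₀ ℕ => f i) hd0
  simp at this

lemma orderGE_one_iff {F : FPS n} : OrderGE F 1 ↔ constantCoeff F = 0 := by
  constructor
  · intro h
    have := h 0 (by simp [deg])
    simpa using this
  · intro h d hd
    have hd0 : d = 0 := deg_eq_zero (Nat.lt_one_iff.mp hd)
    subst hd0
    simpa using h


lemma coeff_mul_Z (F : FPS n) (d : Fin n →₀ ℕ) (i : Fin n) :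
    MvPowerSeries.coeff d (F * Z i) =
      if Finsupp.single i 1 ≤ d then MvPowerSeries.coeff (d - Finsupp.single i 1) F else 0 := by
  rw [Z, coeff_mul]
  rcases Classical.em (Finsupp.single i 1 ≤ d) with h | h
  · rw [if_pos h]
    rw [Finset.sum_eq_single (d - Finsupp.single i 1, Finsupp.single i 1)]
    · rw [coeff_X, if_pos rfl, mul_one]
    · rintro ⟨p, q⟩ hpq hne
      rw [Finset.HasAntidiagonal.mem_antidiagonal] at hpq
      rw [coeff_X]
      rw [if_neg, mul_zero]
      rintro rfl
      exact hne (by rw [← hpq]; simp)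
    · intro hmem
      exfalso
      exact hmem (Finset.HasAntidiagonal.mem_antidiagonal.mpr (tsub_add_cancel_of_le h))
  · rw [if_neg h]
    apply Finset.sum_eq_zero
    rintro ⟨p, q⟩ hpq
    rw [Finset.HasAntidiagonal.mem_antidiagonal] at hpq
    rw [coeff_X, if_neg, mul_zero]
    rintro rfl
    exact h (by rw [← hpq]; exact le_add_self)


lemma exists_decomp_s14 {F : FPS n} (hF : MvPowerSeries.constantCoeff F = 0) :
    ∃ G : Fin n → FPS n, F = ∑ i, G i * Z i ∧
      ∀ i d', MvPowerSeries.coeff d' (G i) ≠ 0 →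
        MvPowerSeries.coeff (d' + Finsupp.single i 1) F ≠ 0 := by
  classical
  set G : Fin n → FPS n := fun i d' =>
    if (d' + Finsupp.single i 1).support.min = (i : WithTop (Fin n))
    then MvPowerSeries.coeff (d' + Finsupp.single i 1) F else 0 with hG
  refine ⟨G, ?_, ?_⟩
  · ext d
    rw [map_sum]
    have hterm : ∀ i, MvPowerSeries.coeff d (G i * Z i) =
        if Finsupp.single i 1 ≤ d then
          (if d.support.min = (i : WithTop (Fin n)) then MvPowerSeries.coeff d F else 0)
        else 0 := by
      intro i
      rw [coeff_mul_Z]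
      rcases Classical.em (Finsupp.single i 1 ≤ d) with h | h
      · rw [if_pos h, if_pos h]
        have : MvPowerSeries.coeff (d - Finsupp.single i 1) (G i) =
            G i (d - Finsupp.single i 1) := rfl
        rw [this, hG]
        simp only [tsub_add_cancel_of_le h]
      · rw [if_neg h, if_neg h]
    rcases Classical.em (d = 0) with rfl | hd0
    · have : ∀ i ∈ Finset.univ (α := Fin n), MvPowerSeries.coeff 0 (G i * Z i) = 0 := by
        intro i _
        rw [hterm i, if_neg]
        intro hle
        have := hle i
        simp at this
      rw [Finset.sum_eq_zero this]
      simp only [MvPowerSeries.coeff_zero_eq_constantCoeff]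
      exact hF
    · have hne : d.support.Nonempty := Finsupp.support_nonempty_iff.mpr hd0
      obtain ⟨j, hj⟩ := Finset.min_of_nonempty hne
      have hjs : j ∈ d.support := Finset.mem_of_min hj
      have hjd : 1 ≤ d j := Nat.one_le_iff_ne_zero.mpr (Finsupp.mem_support_iff.mp hjs)
      rw [Finset.sum_eq_single j]
      · rw [hterm j, if_pos (Finsupp.single_le_iff.mpr hjd), if_pos hj]
      · intro i _ hij
        rw [hterm i]
        rcases Classical.em (Finsupp.single i 1 ≤ d) with h | h
        · rw [if_pos h, if_neg]
          rw [hj]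
          intro hcontr
          exact hij (WithTop.coe_inj.mp hcontr.symm)
        · rw [if_neg h]
      · intro hj'
        exact absurd (Finset.mem_univ j) hj'
  · intro i d' hne
    intro hc
    apply hne
    show G i d' = 0
    rw [hG]
    simp only
    split
    · exact hc
    · rfl


lemma constantCoeff_algebraMap (c : ℂ) :
    MvPowerSeries.constantCoeff ((algebraMap ℂ (FPS n)) c) = c := by
  rw [MvPowerSeries.algebraMap_apply]
  simp

lemma deg_single (i : Fin n) : deg (Finsupp.single i 1) = 1 := by
  rw [deg, Finsupp.sum_single_index]; rfl

lemma exists_decomp_order {F : FPS n} {N : ℕ} (hN : 1 ≤ N) (hF : OrderGE F N) :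
    ∃ G : Fin n → FPS n, F = ∑ i, G i * Z i ∧ ∀ i, OrderGE (G i) (N - 1) := by
  have hcc : MvPowerSeries.constantCoeff F = 0 :=
    orderGE_one_iff.mp (orderGE_of_le hN hF)
  obtain ⟨G, hFG, hord⟩ := exists_decomp_s14 hcc
  refine ⟨G, hFG, fun i d' hd' => ?_⟩
  by_contra hne
  apply hord i d' hne
  apply hF
  have h1 : deg (d' + Finsupp.single i 1) = deg d' + 1 := by
    have := deg_sub_add (e := Finsupp.single i 1) (d := d' + Finsupp.single i 1) le_add_self
    simp only [add_tsub_cancel_right] at this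
    rw [← this, deg_single]
  omega

lemma deriv_coeff_eq_zero (W : FVF n) (K : ℕ) (hK : 1 ≤ K)
    (hW : ∀ i, OrderGE (W (Z i)) (K + 1)) :
    ∀ D : ℕ, ∀ d : Fin n →₀ ℕ, deg d = D → ∀ r, 1 ≤ r → ∀ F : FPS n, OrderGE F r →
      deg d < r + K → MvPowerSeries.coeff d (W F) = 0 := by
  intro D
  induction D using Nat.strong_induction_on with
  | _ D IH =>
  intro d hdD r hr F hF hdeg
  obtain ⟨G, rfl, hord⟩ := exists_decomp_order hr hF
  rw [map_sum, map_sum]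
  apply Finset.sum_eq_zero
  intro i _
  rw [Derivation.leibniz, map_add, smul_eq_mul, smul_eq_mul]
  have hterm2 : MvPowerSeries.coeff d (G i * W (Z i)) = 0 := by
    have : OrderGE (G i * W (Z i)) ((r - 1) + (K + 1)) := orderGE_mul (hord i) (hW i)
    apply this
    omega
  have hterm1 : MvPowerSeries.coeff d (Z i * W (G i)) = 0 := by
    rw [mul_comm, coeff_mul_Z]
    split
    · rename_i hle
      set d' := d - Finsupp.single i 1 with hd'
      have hdd' : deg d' + 1 = deg d := by
        have h2 := deg_sub_add hle
        rw [deg_single] at h2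
        exact h2
      have hD1 : 1 ≤ D := by
        have : 1 ≤ deg d := by omega
        omega
      rcases Nat.lt_or_ge r 2 with hr2 | hr2
      · -- r = 1
        have hr1 : r = 1 := by omega
        set c := MvPowerSeries.constantCoeff (G i) with hc
        have hWG : W (G i) = W (G i - (algebraMap ℂ (FPS n)) c) := by
          rw [map_sub, Derivation.map_algebraMap, sub_zero]
        rw [hWG]
        apply IH (deg d') (by omega) d' rfl 1 le_rfl
        · rw [orderGE_one_iff, map_sub, ← hc, constantCoeff_algebraMap, sub_self]
        · omega
      · -- r ≥ 2
        apply IH (deg d') (by omega) d' rfl (r - 1) (by omega) (G i) (hord i)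
        omega
    · rfl
  rw [hterm2, hterm1, add_zero]

lemma orderGE_deriv {W : FVF n} {K : ℕ} (hK : 1 ≤ K)
    (hW : ∀ i, OrderGE (W (Z i)) (K + 1)) {F : FPS n} {r : ℕ} (hr : 1 ≤ r)
    (hF : OrderGE F r) : OrderGE (W F) (r + K) :=
  fun d hd => deriv_coeff_eq_zero W K hK hW (deg d) d rfl r hr F hF hd

lemma orderGE_deriv_any {W : FVF n} {K : ℕ} (hK : 1 ≤ K)
    (hW : ∀ i, OrderGE (W (Z i)) (K + 1)) (F : FPS n) : OrderGE (W F) (K + 1) := by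
  set c := MvPowerSeries.constantCoeff F with hc
  have hWF : W F = W (F - (algebraMap ℂ (FPS n)) c) := by
    rw [map_sub, Derivation.map_algebraMap, sub_zero]
  rw [hWF]
  have h1 : OrderGE (F - (algebraMap ℂ (FPS n)) c) 1 := by
    rw [orderGE_one_iff, map_sub, ← hc, constantCoeff_algebraMap, sub_self]
  have := orderGE_deriv hK hW le_rfl h1
  rwa [add_comm] at this


lemma C_eq_algebraMap (c : ℂ) :
    (MvPowerSeries.C) c = algebraMap ℂ (FPS n) c := by
  rw [MvPowerSeries.algebraMap_apply]
  simp

lemma aut_constantCoeff (σ : FPS n ≃ₐ[ℂ] FPS n) {F : FPS n}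
    (hF : MvPowerSeries.constantCoeff F = 0) :
    MvPowerSeries.constantCoeff (σ F) = 0 := by
  by_contra h
  have hunit : IsUnit (σ F) :=
    MvPowerSeries.isUnit_iff_constantCoeff.mpr (isUnit_iff_ne_zero.mpr h)
  have hF' : IsUnit F := by
    have := hunit.map (σ.symm : FPS n →+* FPS n)
    simpa using this
  have := MvPowerSeries.isUnit_iff_constantCoeff.mp hF'
  rw [hF] at this
  exact not_isUnit_zero this

lemma hom_orderGE (Φ : FPS n →ₐ[ℂ] FPS n)
    (hΦ : ∀ i, MvPowerSeries.constantCoeff (Φ (Z i)) = 0) :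
    ∀ N (F : FPS n), OrderGE F N → OrderGE (Φ F) N := by
  intro N
  induction N with
  | zero => intro F _ d hd; omega
  | succ N IH =>
    intro F hF
    obtain ⟨G, rfl, hord⟩ := exists_decomp_order (Nat.succ_le_succ (Nat.zero_le N)) hF
    intro d hd
    rw [map_sum, map_sum]
    apply Finset.sum_eq_zero
    intro i _
    rw [map_mul]
    have : OrderGE (Φ (G i) * Φ (Z i)) (N + 1) := by
      have h1 := IH (G i) (by simpa using hord i)
      have h2 : OrderGE (Φ (Z i)) 1 := orderGE_one_iff.mpr (hΦ i)
      exact orderGE_mul h1 h2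
    exact this d hd

lemma aut_orderGE (σ : FPS n ≃ₐ[ℂ] FPS n) {N : ℕ} {F : FPS n} (hF : OrderGE F N) :
    OrderGE (σ F) N := by
  have hΦ : ∀ i, MvPowerSeries.constantCoeff (σ.toAlgHom (Z i)) = 0 := by
    intro i
    apply aut_constantCoeff
    simp [Z]
  exact hom_orderGE σ.toAlgHom hΦ N F hF

lemma exists_trunc (h : FPS n) (N : ℕ) :
    ∃ p : MvPolynomial (Fin n) ℂ, OrderGE (h - (p : FPS n)) N := by
  classical
  set cb : Fin n →₀ ℕ := Finsupp.equivFunOnFinite.symm (fun _ => N) with hcb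
  refine ⟨∑ d ∈ Finset.Iic cb, MvPolynomial.monomial d (MvPowerSeries.coeff d h), ?_⟩
  intro d hd
  have hdcb : d ∈ Finset.Iic cb := by
    rw [Finset.mem_Iic]
    intro i
    calc d i ≤ deg d := apply_le_deg d i
    _ ≤ N := by omega
  rw [map_sub]
  have : MvPowerSeries.coeff d
      ((↑(∑ d' ∈ Finset.Iic cb, MvPolynomial.monomial d' (MvPowerSeries.coeff d' h)) :
        FPS n)) = MvPowerSeries.coeff d h := by
    rw [MvPolynomial.coeff_coe, MvPolynomial.coeff_sum]
    rw [Finset.sum_eq_single d]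
    · rw [MvPolynomial.coeff_monomial, if_pos rfl]
    · intro b _ hbd
      rw [MvPolynomial.coeff_monomial, if_neg hbd]
    · intro hn; exact absurd hdcb hn
  rw [this, sub_self]

lemma aut_eq_on_poly {σ τ : FPS n ≃ₐ[ℂ] FPS n} (h : ∀ i, σ (Z i) = τ (Z i))
    (p : MvPolynomial (Fin n) ℂ) : σ (↑p : FPS n) = τ (↑p : FPS n) := by
  induction p using MvPolynomial.induction_on with
  | C c =>
    rw [MvPolynomial.coe_C, C_eq_algebraMap, AlgEquiv.commutes, AlgEquiv.commutes]
  | add p q hp hq => rw [MvPolynomial.coe_add, map_add, map_add, hp, hq]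
  | mul_X p i hp =>
    rw [MvPolynomial.coe_mul, MvPolynomial.coe_X, map_mul, map_mul, hp, show (MvPowerSeries.X i : FPS n) = Z i from rfl, h i]


lemma aut_ext {σ τ : FPS n ≃ₐ[ℂ] FPS n} (h : ∀ i, σ (Z i) = τ (Z i)) (F : FPS n) :
    σ F = τ F := by
  ext d
  obtain ⟨p, hp⟩ := exists_trunc F (deg d + 1)
  have hFd : F = ↑p + (F - ↑p) := by ring
  rw [hFd, map_add, map_add, map_add, map_add]
  rw [aut_eq_on_poly h p]
  rw [aut_orderGE σ hp d (by omega), aut_orderGE τ hp d (by omega)]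

lemma deriv_orderGE_of_vanish {Δ : FVF n} (hΔ : ∀ i, Δ (Z i) = 0) :
    ∀ N (F : FPS n), OrderGE F N → OrderGE (Δ F) N := by
  intro N
  induction N with
  | zero => intro F _ d hd; omega
  | succ N IH =>
    intro F hF
    obtain ⟨G, rfl, hord⟩ := exists_decomp_order (Nat.succ_le_succ (Nat.zero_le N)) hF
    intro d hd
    rw [map_sum, map_sum]
    apply Finset.sum_eq_zero
    intro i _
    rw [Derivation.leibniz, hΔ i, smul_zero, zero_add, smul_eq_mul]
    have h1 : OrderGE (Z i * Δ (G i)) (1 + N) :=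
      orderGE_mul (orderGE_X i) (IH (G i) (by simpa using hord i))
    apply h1
    omega

lemma deriv_zero_on_poly {Δ : FVF n} (hΔ : ∀ i, Δ (Z i) = 0)
    (p : MvPolynomial (Fin n) ℂ) : Δ (↑p : FPS n) = 0 := by
  induction p using MvPolynomial.induction_on with
  | C c => rw [MvPolynomial.coe_C, C_eq_algebraMap, Derivation.map_algebraMap]
  | add p q hp hq => rw [MvPolynomial.coe_add, map_add, hp, hq, add_zero]
  | mul_X p i hp =>
    rw [MvPolynomial.coe_mul, MvPolynomial.coe_X, Derivation.leibniz,
      show (MvPowerSeries.X i : FPS n) = Z i from rfl, hΔ i, hp, smul_zero, smul_zero, add_zero]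

lemma deriv_ext {D D' : FVF n} (h : ∀ i, D (Z i) = D' (Z i)) (F : FPS n) : D F = D' F := by
  have hΔ : ∀ i, (D - D') (Z i) = 0 := by
    intro i
    rw [Derivation.sub_apply, h i, sub_self]
  have key : (D - D') F = 0 := by
    ext d
    obtain ⟨p, hp⟩ := exists_trunc F (deg d + 1)
    have hFd : F = ↑p + (F - ↑p) := by ring
    rw [hFd, map_add, map_add, deriv_zero_on_poly hΔ p, map_zero, zero_add]
    rw [deriv_orderGE_of_vanish hΔ (deg d + 1) _ hp d (by omega)]
  have h2 := Derivation.sub_apply (D1 := D) (D2 := D') (a := F)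
  rw [key] at h2
  exact sub_eq_zero.mp h2.symm


lemma iter_zero_apply (W : FVF n) (j : ℕ) : (⇑W)^[j] 0 = 0 := by
  induction j with
  | zero => rfl
  | succ j IH => rw [Function.iterate_succ_apply', IH, map_zero]

lemma iter_add (W : FVF n) (j : ℕ) (a b : FPS n) :
    (⇑W)^[j] (a + b) = (⇑W)^[j] a + (⇑W)^[j] b := by
  induction j with
  | zero => rfl
  | succ j IH => rw [Function.iterate_succ_apply', IH, map_add,
      Function.iterate_succ_apply', Function.iterate_succ_apply']

lemma iter_smul (W : FVF n) (j : ℕ) (c : ℂ) (a : FPS n) :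
    (⇑W)^[j] (c • a) = c • (⇑W)^[j] a := by
  induction j with
  | zero => rfl
  | succ j IH => rw [Function.iterate_succ_apply', IH, Derivation.map_smul,
      Function.iterate_succ_apply']

lemma iter_sum (W : FVF n) (j : ℕ) {α : Type*} (s : Finset α) (g : α → FPS n) :
    (⇑W)^[j] (∑ a ∈ s, g a) = ∑ a ∈ s, (⇑W)^[j] (g a) := by
  classical
  induction s using Finset.induction_on with
  | empty => simp [iter_zero_apply]
  | insert _ _ hx IH =>
    rw [Finset.sum_insert hx, iter_add, IH, Finset.sum_insert hx]

lemma iter_leibniz (W : FVF n) : ∀ (j : ℕ) (a b : FPS n), (⇑W)^[j] (a * b) =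
    ∑ pq ∈ Finset.HasAntidiagonal.antidiagonal j, (j.choose pq.1 : ℂ) • ((⇑W)^[pq.1] a * (⇑W)^[pq.2] b) := by
  intro j
  induction j with
  | zero =>
    intro a b
    rw [Finset.Nat.antidiagonal_zero, Finset.sum_singleton]
    simp
  | succ j IH =>
    intro a b
    rw [Function.iterate_succ_apply', IH, map_sum]
    have hterm : ∀ pq ∈ Finset.HasAntidiagonal.antidiagonal j,
        W ((j.choose pq.1 : ℂ) • ((⇑W)^[pq.1] a * (⇑W)^[pq.2] b)) =
          (j.choose pq.1 : ℂ) • ((⇑W)^[pq.1] a * (⇑W)^[pq.2 + 1] b)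
          + (j.choose pq.1 : ℂ) • ((⇑W)^[pq.1 + 1] a * (⇑W)^[pq.2] b) := by
      rintro ⟨p, q⟩ _
      rw [Derivation.map_smul, Derivation.leibniz, smul_eq_mul, smul_eq_mul, smul_add,
        mul_comm ((⇑W)^[q] b) (W ((⇑W)^[p] a)),
        ← Function.iterate_succ_apply' (⇑W) q b, ← Function.iterate_succ_apply' (⇑W) p a]
    rw [Finset.sum_congr rfl hterm, Finset.sum_add_distrib]
    -- first sum = ∑_{ad (j+1)} g, second = ∑_{ad (j+1)} g'
    set g : ℕ × ℕ → FPS n := fun pq => (j.choose pq.1 : ℂ) • ((⇑W)^[pq.1] a * (⇑W)^[pq.2] b)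
      with hg
    set g' : ℕ × ℕ → FPS n := fun pq => if pq.1 = 0 then 0 else
      (j.choose (pq.1 - 1) : ℂ) • ((⇑W)^[pq.1] a * (⇑W)^[pq.2] b) with hg'
    have h1 : ∑ pq ∈ Finset.HasAntidiagonal.antidiagonal j,
        (j.choose pq.1 : ℂ) • ((⇑W)^[pq.1] a * (⇑W)^[pq.2 + 1] b)
        = ∑ pq ∈ Finset.HasAntidiagonal.antidiagonal (j + 1), g pq := by
      rw [Finset.Nat.sum_antidiagonal_succ' (f := g)]
      have : g (j + 1, 0) = 0 := by
        simp [hg, Nat.choose_succ_self]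
      rw [this, zero_add]
    have h2 : ∑ pq ∈ Finset.HasAntidiagonal.antidiagonal j,
        (j.choose pq.1 : ℂ) • ((⇑W)^[pq.1 + 1] a * (⇑W)^[pq.2] b)
        = ∑ pq ∈ Finset.HasAntidiagonal.antidiagonal (j + 1), g' pq := by
      rw [Finset.Nat.sum_antidiagonal_succ (f := g')]
      have : g' (0, j + 1) = 0 := by simp [hg']
      rw [this, zero_add]
      apply Finset.sum_congr rfl
      rintro ⟨p, q⟩ _
      simp [hg']
    rw [h1, h2, ← Finset.sum_add_distrib]
    apply Finset.sum_congr rfl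
    rintro ⟨p, q⟩ _
    cases p with
    | zero => simp [hg, hg']
    | succ p =>
      simp only [hg, hg', if_neg (Nat.succ_ne_zero p), Nat.succ_sub_one]
      rw [← add_smul, ← Nat.cast_add]
      rw [show j.choose (p+1) + j.choose p = (j+1).choose (p+1) from by
        rw [Nat.choose_succ_succ, Nat.add_comm]]


lemma iter_deriv_order {W : FVF n} {K : ℕ} (hK : 1 ≤ K)
    (hW : ∀ i, OrderGE (W (Z i)) (K + 1)) {F : FPS n} {N : ℕ} (hN : 1 ≤ N)
    (hF : OrderGE F N) : ∀ j, OrderGE ((⇑W)^[j] F) (N + j * K) := by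
  intro j
  induction j with
  | zero => simpa using hF
  | succ j IH =>
    rw [Function.iterate_succ_apply']
    have := orderGE_deriv hK hW (r := N + j * K) (by omega) IH
    apply orderGE_of_le _ this
    ring_nf
    omega

lemma iter_deriv_any {W : FVF n} {K : ℕ} (hK : 1 ≤ K)
    (hW : ∀ i, OrderGE (W (Z i)) (K + 1)) (F : FPS n) {j : ℕ} (hj : 1 ≤ j) :
    OrderGE ((⇑W)^[j] F) (1 + j * K) := by
  obtain ⟨j', rfl⟩ : ∃ j', j = j' + 1 := ⟨j - 1, by omega⟩
  rw [Function.iterate_succ_apply]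
  have h1 : OrderGE (W F) (K + 1) := orderGE_deriv_any hK hW F
  have := iter_deriv_order hK hW (by omega) h1 j'
  apply orderGE_of_le _ this
  ring_nf
  omega

lemma iter_deriv_pres {W : FVF n} {K : ℕ} (hK : 1 ≤ K)
    (hW : ∀ i, OrderGE (W (Z i)) (K + 1)) {F : FPS n} {N : ℕ} (hN : 1 ≤ N)
    (hF : OrderGE F N) (j : ℕ) : OrderGE ((⇑W)^[j] F) N := by
  apply orderGE_of_le _ (iter_deriv_order hK hW hN hF j)
  omega

lemma scalar_id (t : ℂ) (p q : ℕ) :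
    (t ^ (p + q) / ((p + q).factorial : ℂ)) * ((p + q).choose p : ℂ)
      = (t ^ p / (p.factorial : ℂ)) * (t ^ q / (q.factorial : ℂ)) := by
  have h := Nat.choose_mul_factorial_mul_factorial (Nat.le_add_right p q)
  rw [Nat.add_sub_cancel_left] at h
  have hc : (((p + q).choose p : ℂ)) * (p.factorial : ℂ) * (q.factorial : ℂ)
      = ((p + q).factorial : ℂ) := by exact_mod_cast congrArg (Nat.cast (R := ℂ)) h
  have hp : (p.factorial : ℂ) ≠ 0 := Nat.cast_ne_zero.mpr p.factorial_ne_zero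
  have hq : (q.factorial : ℂ) ≠ 0 := Nat.cast_ne_zero.mpr q.factorial_ne_zero
  have hpq : ((p + q).factorial : ℂ) ≠ 0 := Nat.cast_ne_zero.mpr (p + q).factorial_ne_zero
  field_simp
  rw [pow_add]
  linear_combination (t ^ p * t ^ q) * hc

lemma biUnion_antidiagonal_eq (J : ℕ) :
    (Finset.range (J + 1)).biUnion (fun j => Finset.HasAntidiagonal.antidiagonal j)
      = (Finset.range (J + 1) ×ˢ Finset.range (J + 1)).filter
          (fun pq => pq.1 + pq.2 ≤ J) := by
  ext ⟨p, q⟩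
  simp only [Finset.mem_biUnion, Finset.mem_range, Finset.HasAntidiagonal.mem_antidiagonal,
    Finset.mem_filter, Finset.mem_product]
  constructor
  · rintro ⟨j, hj, rfl⟩
    omega
  · rintro ⟨⟨h1, h2⟩, h3⟩
    exact ⟨p + q, by omega, rfl⟩


/-- the property that the "exp formula" holds for `σ` at `h`, to every precision. -/
def Good (σ : FPS n ≃ₐ[ℂ] FPS n) (t : ℂ) (X : FVF n) (h : FPS n) : Prop :=
  ∀ d J, deg d ≤ J → MvPowerSeries.coeff d (σ h) =
    ∑ j ∈ Finset.range (J + 1),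
      (t ^ j / (j.factorial : ℂ)) * MvPowerSeries.coeff d ((⇑X)^[j] h)

section
variable {X : FVF n} {k : ℕ} (hk : 1 ≤ k) (hX : ∀ i, OrderGE (X (Z i)) (k + 1))
  {σ : FPS n ≃ₐ[ℂ] FPS n} {t : ℂ}

include hk hX in
lemma coeff_iter_vanish (h : FPS n) (d : Fin n →₀ ℕ) {j : ℕ} (hj : deg d < j) :
    MvPowerSeries.coeff d ((⇑X)^[j] h) = 0 := by
  have hj1 : 1 ≤ j := by omega
  apply iter_deriv_any hk hX h hj1
  have : j ≤ j * k := Nat.le_mul_of_pos_right j (by omega)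
  omega

include hk hX in
lemma good_Z (hσ : ∀ i d, MvPowerSeries.coeff d (σ (Z i)) =
    ∑' j : ℕ, (t ^ j / (j.factorial : ℂ)) * MvPowerSeries.coeff d ((⇑X)^[j] (Z i)))
    (i : Fin n) : Good σ t X (Z i) := by
  intro d J hdJ
  rw [hσ i d]
  apply tsum_eq_sum
  intro j hj
  rw [Finset.mem_range, not_lt] at hj
  rw [coeff_iter_vanish hk hX _ d (by omega), mul_zero]

lemma good_algebraMap (c : ℂ) : Good σ t X (algebraMap ℂ (FPS n) c) := by
  intro d J hdJ
  rw [AlgEquiv.commutes]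
  rw [Finset.sum_eq_single 0]
  · simp
  · intro j _ hj
    obtain ⟨j', rfl⟩ : ∃ j', j = j' + 1 := ⟨j - 1, by omega⟩
    rw [Function.iterate_succ_apply, Derivation.map_algebraMap, iter_zero_apply,
      map_zero, mul_zero]
  · intro hmem
    exact absurd (Finset.mem_range.mpr (by omega)) hmem

lemma good_add {g h : FPS n} (hg : Good σ t X g) (hh : Good σ t X h) :
    Good σ t X (g + h) := by
  intro d J hdJ
  rw [map_add, map_add, hg d J hdJ, hh d J hdJ, ← Finset.sum_add_distrib]
  apply Finset.sum_congr rfl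
  intro j _
  rw [iter_add, map_add, mul_add]

include hk hX in
lemma good_mul {g h : FPS n} (hg : Good σ t X g) (hh : Good σ t X h) :
    Good σ t X (g * h) := by
  intro d J hdJ
  have hL : ∀ dd ∈ Finset.HasAntidiagonal.antidiagonal d,
      MvPowerSeries.coeff dd.1 (σ g) * MvPowerSeries.coeff dd.2 (σ h)
      = ∑ pq ∈ Finset.range (J + 1) ×ˢ Finset.range (J + 1),
          ((t ^ pq.1 / (pq.1.factorial : ℂ)) * MvPowerSeries.coeff dd.1 ((⇑X)^[pq.1] g))
          * ((t ^ pq.2 / (pq.2.factorial : ℂ)) *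
              MvPowerSeries.coeff dd.2 ((⇑X)^[pq.2] h)) := by
    rintro ⟨d1, d2⟩ hdd
    rw [Finset.HasAntidiagonal.mem_antidiagonal] at hdd
    have hdd : d1 + d2 = d := hdd
    have hd1 : deg d1 ≤ J := by
      have : deg d1 ≤ deg d := by rw [← hdd, deg_add]; omega
      omega
    have hd2 : deg d2 ≤ J := by
      have : deg d2 ≤ deg d := by rw [← hdd, deg_add]; omega
      omega
    rw [hg d1 J hd1, hh d2 J hd2, Finset.sum_mul_sum]
    rw [← Finset.sum_product']
  have hdisj : ∀ a ∈ (Finset.range (J + 1) : Finset ℕ), ∀ b ∈ Finset.range (J + 1),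
      a ≠ b → Disjoint (Finset.HasAntidiagonal.antidiagonal a) (Finset.HasAntidiagonal.antidiagonal b) := by
    intro a _ b _ hab
    rw [Finset.disjoint_left]
    rintro ⟨p, q⟩ hp hq
    rw [Finset.HasAntidiagonal.mem_antidiagonal] at hp hq
    exact hab (hp ▸ hq)
  have hR : ∀ j ∈ Finset.range (J + 1),
      (t ^ j / (j.factorial : ℂ)) * MvPowerSeries.coeff d ((⇑X)^[j] (g * h))
      = ∑ pq ∈ Finset.HasAntidiagonal.antidiagonal j, ∑ dd ∈ Finset.HasAntidiagonal.antidiagonal d,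
          ((t ^ pq.1 / (pq.1.factorial : ℂ)) * MvPowerSeries.coeff dd.1 ((⇑X)^[pq.1] g))
          * ((t ^ pq.2 / (pq.2.factorial : ℂ)) *
              MvPowerSeries.coeff dd.2 ((⇑X)^[pq.2] h)) := by
    intro j _
    rw [iter_leibniz, map_sum, Finset.mul_sum]
    apply Finset.sum_congr rfl
    rintro ⟨p, q⟩ hpq
    rw [Finset.HasAntidiagonal.mem_antidiagonal] at hpq
    subst hpq
    rw [map_smul, smul_eq_mul, ← mul_assoc, scalar_id, coeff_mul, Finset.mul_sum]
    apply Finset.sum_congr rfl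
    rintro ⟨d1, d2⟩ _
    ring
  rw [map_mul, coeff_mul, Finset.sum_congr rfl hL, Finset.sum_comm,
    Finset.sum_congr rfl hR, ← Finset.sum_biUnion hdisj, biUnion_antidiagonal_eq]
  rw [eq_comm]
  apply Finset.sum_subset (Finset.filter_subset _ _)
  intro pq hpq hnot
  rw [Finset.mem_filter] at hnot
  have hgt : J < pq.1 + pq.2 := by
    rcases Nat.lt_or_ge J (pq.1 + pq.2) with h1 | h1
    · exact h1
    · exact absurd ⟨hpq, h1⟩ hnot
  apply Finset.sum_eq_zero
  rintro ⟨d1, d2⟩ hdd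
  rw [Finset.HasAntidiagonal.mem_antidiagonal] at hdd
  have hdd : d1 + d2 = d := hdd
  have hdsum : deg d1 + deg d2 = deg d := by rw [← hdd, deg_add]
  rcases Nat.lt_or_ge (deg d1) pq.1 with h1 | h1
  · rw [coeff_iter_vanish hk hX g d1 h1, mul_zero, zero_mul]
  · have h2 : deg d2 < pq.2 := by omega
    rw [coeff_iter_vanish hk hX h d2 h2, mul_zero, mul_zero]

include hk hX in
lemma good_poly (hσ : ∀ i d, MvPowerSeries.coeff d (σ (Z i)) =
    ∑' j : ℕ, (t ^ j / (j.factorial : ℂ)) * MvPowerSeries.coeff d ((⇑X)^[j] (Z i)))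
    (p : MvPolynomial (Fin n) ℂ) : Good σ t X (↑p : FPS n) := by
  induction p using MvPolynomial.induction_on with
  | C c => rw [MvPolynomial.coe_C, C_eq_algebraMap]; exact good_algebraMap c
  | add p q hp hq => rw [MvPolynomial.coe_add]; exact good_add hp hq
  | mul_X p i hp =>
    rw [MvPolynomial.coe_mul, MvPolynomial.coe_X]
    exact good_mul hk hX hp (good_Z hk hX hσ i)

include hk hX in
lemma exp_formula (hσ : ∀ i d, MvPowerSeries.coeff d (σ (Z i)) =
    ∑' j : ℕ, (t ^ j / (j.factorial : ℂ)) * MvPowerSeries.coeff d ((⇑X)^[j] (Z i)))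
    (h : FPS n) : Good σ t X h := by
  intro d J hdJ
  obtain ⟨p, hp⟩ := exists_trunc h (deg d + 1)
  have hsplit : h = ↑p + (h - ↑p) := by ring
  rw [hsplit, map_add, map_add]
  rw [Finset.sum_congr rfl (fun j _ => by rw [iter_add, map_add, mul_add]),
    Finset.sum_add_distrib]
  rw [aut_orderGE σ hp d (by omega)]
  have h2 : ∑ j ∈ Finset.range (J + 1),
      (t ^ j / (j.factorial : ℂ)) * MvPowerSeries.coeff d ((⇑X)^[j] (h - ↑p)) = 0 := by
    apply Finset.sum_eq_zero
    intro j _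
    rw [iter_deriv_pres hk hX (N := deg d + 1) (by omega) hp j d (by omega), mul_zero]
  rw [h2, add_zero, add_zero]
  exact good_poly hk hX hσ p d J hdJ
end


lemma conj_one (f : FPS n ≃ₐ[ℂ] FPS n) (X : FVF n) : f (X (f.symm 1)) = 0 := by
  rw [map_one, Derivation.map_one_eq_zero, map_zero]

/-- The pushforward `f_* X = f ∘ X ∘ f⁻¹` of a formal vector field. -/
def conjDer (f : FPS n ≃ₐ[ℂ] FPS n) (X : FVF n) : FVF n :=
  { toLinearMap := f.toLinearMap.comp (X.toLinearMap.comp f.symm.toLinearMap)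
    map_one_eq_zero' := by
      simp only [LinearMap.comp_apply, AlgEquiv.toLinearMap_apply, Derivation.coeFn_coe]
      exact conj_one f X
    leibniz' := by
      intro a b
      simp only [LinearMap.comp_apply, AlgEquiv.toLinearMap_apply, Derivation.coeFn_coe]
      rw [map_mul, Derivation.leibniz, map_add, smul_eq_mul, smul_eq_mul, map_mul, map_mul,
        AlgEquiv.apply_symm_apply, AlgEquiv.apply_symm_apply, smul_eq_mul, smul_eq_mul] }

lemma conjDer_apply (f : FPS n ≃ₐ[ℂ] FPS n) (X : FVF n) (h : FPS n) :
    conjDer f X h = f (X (f.symm h)) := rfl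

lemma conjDer_iter (f : FPS n ≃ₐ[ℂ] FPS n) (X : FVF n) :
    ∀ (j : ℕ) (h : FPS n), (⇑(conjDer f X))^[j] h = f ((⇑X)^[j] (f.symm h)) := by
  intro j
  induction j with
  | zero => intro h; simp
  | succ j IH =>
    intro h
    rw [Function.iterate_succ_apply', IH, conjDer_apply,
      AlgEquiv.symm_apply_apply, ← Function.iterate_succ_apply' (⇑X) j (f.symm h)]


section Assembly
variable {X : FVF n} {k : ℕ} {f σ : FPS n ≃ₐ[ℂ] FPS n} {t : ℂ}

lemma conjDer_orderGE (f : FPS n ≃ₐ[ℂ] FPS n) (hk : 1 ≤ k)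
    (hX : ∀ i, OrderGE (X (Z i)) (k + 1)) :
    ∀ i, OrderGE (conjDer f X (Z i)) (k + 1) := by
  intro i
  rw [conjDer_apply]
  apply aut_orderGE
  have h1 : OrderGE (f.symm (Z i)) 1 :=
    orderGE_one_iff.mpr (aut_constantCoeff f.symm (by simp [Z]))
  have := orderGE_deriv hk hX le_rfl h1
  apply orderGE_of_le _ this
  omega

lemma conj_formula (hk : 1 ≤ k) (hX : ∀ i, OrderGE (X (Z i)) (k + 1))
    (hσ : ∀ i d, MvPowerSeries.coeff d (σ (Z i)) =
      ∑' j : ℕ, (t ^ j / (j.factorial : ℂ)) * MvPowerSeries.coeff d ((⇑X)^[j] (Z i)))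
    (hcm : ∀ x, σ (f x) = f (σ x)) :
    ∀ (h : FPS n) d J, deg d ≤ J → MvPowerSeries.coeff d (σ h) =
      ∑ j ∈ Finset.range (J + 1),
        (t ^ j / (j.factorial : ℂ)) * MvPowerSeries.coeff d ((⇑(conjDer f X))^[j] h) := by
  intro h d J hdJ
  set P : FPS n := ∑ j ∈ Finset.range (J + 1),
    (t ^ j / (j.factorial : ℂ)) • (⇑X)^[j] (f.symm h) with hP
  have hQP : OrderGE (σ (f.symm h) - P) (J + 1) := by
    intro d' hd'
    have hcoeffP : MvPowerSeries.coeff d' P = ∑ j ∈ Finset.range (J + 1),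
        (t ^ j / (j.factorial : ℂ)) * MvPowerSeries.coeff d' ((⇑X)^[j] (f.symm h)) := by
      rw [hP, map_sum]
      exact Finset.sum_congr rfl (fun j _ => by rw [map_smul, smul_eq_mul])
    rw [map_sub, exp_formula hk hX hσ (f.symm h) d' J (by omega), hcoeffP, sub_self]
  have hσh : σ h = f (P + (σ (f.symm h) - P)) := by
    rw [show P + (σ (f.symm h) - P) = σ (f.symm h) from by ring]
    conv_lhs => rw [← f.apply_symm_apply h]
    rw [hcm]
  rw [hσh, map_add, map_add]
  rw [aut_orderGE f hQP d (by omega), add_zero, hP, map_sum, map_sum]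
  apply Finset.sum_congr rfl
  intro j _
  rw [map_smul, map_smul, smul_eq_mul, conjDer_iter]

lemma delta_vanish (hk : 1 ≤ k) (hX : ∀ i, OrderGE (X (Z i)) (k + 1))
    (hσ : ∀ i d, MvPowerSeries.coeff d (σ (Z i)) =
      ∑' j : ℕ, (((1:ℂ)) ^ j / (j.factorial : ℂ)) * MvPowerSeries.coeff d ((⇑X)^[j] (Z i)))
    (hcm : ∀ x, σ (f x) = f (σ x)) :
    ∀ i, X (Z i) = conjDer f X (Z i) := by
  set Y := conjDer f X with hYdef
  have hYord : ∀ i, OrderGE (Y (Z i)) (k + 1) := conjDer_orderGE f hk hX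
  set Δ : FVF n := Y - X with hΔdef
  have hΔZ : ∀ h : FPS n, Δ h = Y h - X h := fun h => by
    rw [hΔdef, Derivation.sub_apply]
  have relA : ∀ (i : Fin n) d J, deg d ≤ J →
      ∑ j ∈ Finset.range (J + 1),
        ((1:ℂ) ^ j / (j.factorial : ℂ)) * MvPowerSeries.coeff d ((⇑X)^[j] (Z i)) =
      ∑ j ∈ Finset.range (J + 1),
        ((1:ℂ) ^ j / (j.factorial : ℂ)) * MvPowerSeries.coeff d ((⇑Y)^[j] (Z i)) := by
    intro i d J hdJ
    rw [← exp_formula hk hX hσ (Z i) d J hdJ, ← conj_formula hk hX hσ hcm (Z i) d J hdJ]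
  have main : ∀ s i, OrderGE (Δ (Z i)) (k + 1 + s) := by
    intro s
    induction s with
    | zero =>
      intro i d hd
      rw [hΔZ]
      exact orderGE_sub (hYord i) (hX i) d (by omega)
    | succ s IH =>
      set m := k + 1 + s with hm
      have hm2 : 2 ≤ m := by omega
      intro i d hd
      rcases Nat.lt_or_ge (deg d) m with hdm | hdm
      · exact IH i d hdm
      have hdm' : deg d = m := by omega
      have hdiff : ∀ j', OrderGE ((⇑X)^[j' + 1] (Z i) - (⇑Y)^[j' + 1] (Z i)) (m + j' * k) := by
        intro j'
        induction j' with
        | zero =>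
          have heq : (⇑X)^[0 + 1] (Z i) - (⇑Y)^[0 + 1] (Z i) = -(Δ (Z i)) := by
            rw [hΔZ]
            simp
          rw [heq]
          have := orderGE_neg (IH i)
          apply orderGE_of_le _ this
          omega
        | succ j' IH2 =>
          have hsplit : (⇑X)^[j' + 1 + 1] (Z i) - (⇑Y)^[j' + 1 + 1] (Z i)
              = X ((⇑X)^[j' + 1] (Z i) - (⇑Y)^[j' + 1] (Z i)) - Δ ((⇑Y)^[j' + 1] (Z i)) := by
            rw [Function.iterate_succ_apply' (⇑X), Function.iterate_succ_apply' (⇑Y),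
              map_sub, hΔZ]
            ring
          rw [hsplit]
          apply orderGE_sub
          · have := orderGE_deriv hk hX (r := m + j' * k) (by omega) IH2
            apply orderGE_of_le _ this
            ring_nf
            omega
          · have hYj : OrderGE ((⇑Y)^[j' + 1] (Z i)) (1 + (j' + 1) * k) :=
              iter_deriv_any hk hYord _ (by omega)
            have hΔW : ∀ i2, OrderGE (Δ (Z i2)) ((m - 1) + 1) := by
              intro i2
              apply orderGE_of_le _ (IH i2)
              omega
            have hΔd := orderGE_deriv (K := m - 1) (by omega) hΔW
              (r := 1 + (j' + 1) * k) (by omega) hYj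
            apply orderGE_of_le _ hΔd
            ring_nf
            omega
      have hrel := relA i d m (le_of_eq hdm')
      have hsum : ∑ j ∈ Finset.range (m + 1), ((1:ℂ) ^ j / (j.factorial : ℂ)) *
          MvPowerSeries.coeff d ((⇑X)^[j] (Z i) - (⇑Y)^[j] (Z i)) = 0 := by
        rw [Finset.sum_congr rfl (fun j _ => by rw [map_sub, mul_sub]),
          Finset.sum_sub_distrib, hrel, sub_self]
      rw [Finset.sum_eq_single 1] at hsum
      · have hone : MvPowerSeries.coeff d ((⇑X)^[1] (Z i) - (⇑Y)^[1] (Z i)) = 0 := by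
          have h11 : ((1:ℂ) ^ 1 / ((Nat.factorial 1 : ℕ) : ℂ)) = 1 := by norm_num
          rw [h11, one_mul] at hsum
          exact hsum
        simp only [Function.iterate_one] at hone
        rw [hΔZ, map_sub]
        rw [map_sub] at hone
        have : MvPowerSeries.coeff d (X (Z i)) = MvPowerSeries.coeff d (Y (Z i)) := by
          linear_combination hone
        rw [this, sub_self]
      · intro j hj hne
        match j, hne with
        | 0, _ => simp
        | (j' + 1), hne =>
          have hj1 : 1 ≤ j' := by omega
          rw [hdiff j' d (by
            have : 1 ≤ j' * k := by
              calc 1 ≤ j' := hj1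
              _ ≤ j' * k := Nat.le_mul_of_pos_right j' (by omega)
            omega), mul_zero]
      · intro hmem
        exact absurd (Finset.mem_range.mpr (by omega)) hmem
  intro i
  have hΔ0 : Δ (Z i) = 0 := by
    ext d
    rw [map_zero]
    exact main (deg d) i d (by omega)
  rw [hΔZ] at hΔ0
  exact (sub_eq_zero.mp hΔ0).symm

end Assembly

section Final
variable {X : FVF n} {k : ℕ} {f σ : FPS n ≃ₐ[ℂ] FPS n}

lemma invarianceA (hk : 1 ≤ k) (hX : ∀ i, OrderGE (X (Z i)) (k + 1))
    (hσ : ∀ i d, MvPowerSeries.coeff d (σ (Z i)) =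
      ∑' j : ℕ, (((1:ℂ)) ^ j / (j.factorial : ℂ)) * MvPowerSeries.coeff d ((⇑X)^[j] (Z i)))
    (hcm : ∀ x, σ (f x) = f (σ x)) : ∀ h, f (X h) = X (f h) := by
  have hall : ∀ h, X h = conjDer f X h := deriv_ext (delta_vanish hk hX hσ hcm)
  intro h
  have h2 := hall (f h)
  rw [conjDer_apply, AlgEquiv.symm_apply_apply] at h2
  exact h2.symm

lemma invariance_iterA (hinv : ∀ h, f (X h) = X (f h)) :
    ∀ (j : ℕ) (h : FPS n), f ((⇑X)^[j] h) = (⇑X)^[j] (f h) := by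
  intro j
  induction j with
  | zero => intro h; rfl
  | succ j IH =>
    intro h
    rw [Function.iterate_succ_apply' (⇑X), Function.iterate_succ_apply' (⇑X), hinv, IH]

end Final


end Aux

/-- if a formal diffeomorphism commutes with the time-one map
`exp X̂` of a formal vector field `X̂ ∈ X̂_k(ℂⁿ,0)`, `k ≥ 1` (so vanishing to
order `≥ 2`), then it commutes with `exp (t X̂)` for every `t ∈ ℂ`. -/
theorem commutes_with_flow_of_commutes_with_time_one
    (n : ℕ) (X : FVF n) (k : ℕ) (hk : 1 ≤ k) (hX : VFOrderGE X (k + 1))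
    (f e : FDiff n) (he : IsExp e X) (hcomm : f * e = e * f) :
    ∀ (t : ℂ) (e' : FDiff n), IsExpT e' t X → f * e' = e' * f := by
  intro t e' he'
  have hcm : ∀ x, e.unop (f.unop x) = f.unop (e.unop x) := by
    intro x
    have h1 := congrArg MulOpposite.unop hcomm
    rw [MulOpposite.unop_mul, MulOpposite.unop_mul] at h1
    have h2 := congrArg (fun (ρ : FPS n ≃ₐ[ℂ] FPS n) => ρ x) h1
    simpa [AlgEquiv.mul_apply] using h2
  have hσ : ∀ i d, MvPowerSeries.coeff d (e.unop (Z i)) =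
      ∑' j : ℕ, (((1:ℂ)) ^ j / (j.factorial : ℂ)) *
        MvPowerSeries.coeff d ((⇑X)^[j] (Z i)) := he
  have hinv : ∀ h, f.unop (X h) = X (f.unop h) := invarianceA hk hX hσ hcm
  have hiter := invariance_iterA hinv
  have hσ' : ∀ i d, MvPowerSeries.coeff d (e'.unop (Z i)) =
      ∑' j : ℕ, (t ^ j / (j.factorial : ℂ)) *
        MvPowerSeries.coeff d ((⇑X)^[j] (Z i)) := he'
  have key : ∀ i, f.unop (e'.unop (Z i)) = e'.unop (f.unop (Z i)) := by
    intro i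
    ext d
    set J := deg d with hJ
    set P : FPS n := ∑ j ∈ Finset.range (J + 1),
      (t ^ j / (j.factorial : ℂ)) • (⇑X)^[j] (Z i) with hP
    have hcoeffP : ∀ d', MvPowerSeries.coeff d' P = ∑ j ∈ Finset.range (J + 1),
        (t ^ j / (j.factorial : ℂ)) * MvPowerSeries.coeff d' ((⇑X)^[j] (Z i)) := by
      intro d'
      rw [hP, map_sum]
      exact Finset.sum_congr rfl (fun j _ => by rw [map_smul, smul_eq_mul])
    have hR : OrderGE (e'.unop (Z i) - P) (J + 1) := by
      intro d' hd'
      rw [map_sub, exp_formula hk hX hσ' (Z i) d' J (by omega), hcoeffP, sub_self]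
    have hsplit : e'.unop (Z i) = P + (e'.unop (Z i) - P) := by ring
    rw [hsplit, map_add, map_add]
    rw [aut_orderGE f.unop hR d (by omega), add_zero]
    have hfP : MvPowerSeries.coeff d (f.unop P) = ∑ j ∈ Finset.range (J + 1),
        (t ^ j / (j.factorial : ℂ)) *
          MvPowerSeries.coeff d ((⇑X)^[j] (f.unop (Z i))) := by
      rw [hP, map_sum, map_sum]
      apply Finset.sum_congr rfl
      intro j _
      rw [map_smul, map_smul, smul_eq_mul, hiter j (Z i)]
    rw [hfP, ← exp_formula hk hX hσ' (f.unop (Z i)) d J (le_of_eq hJ.symm)]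
  apply MulOpposite.unop_injective
  rw [MulOpposite.unop_mul, MulOpposite.unop_mul]
  apply AlgEquiv.ext
  intro x
  rw [AlgEquiv.mul_apply, AlgEquiv.mul_apply]
  have key2 := aut_ext (σ := f.unop.trans e'.unop) (τ := e'.unop.trans f.unop)
    (fun i => by rw [AlgEquiv.trans_apply, AlgEquiv.trans_apply]; exact (key i).symm) x
  rw [AlgEquiv.trans_apply, AlgEquiv.trans_apply] at key2
  exact key2

end FormalGroups
end
end
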